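/- For real x → ∞, π/arccos((2x²−1)/(2x²)) = x·π + O(1/x); more precisely, |π/arccos(1 − 1/(2x²)) − πx| ≤ C/x for some constant C and all x ≥ 1. -/

import Mathlib

open Real

private lemma arccos_anti {u v : ℝ} (h : u ≤ v) : Real.arccos v ≤ Real.arccos u := by
  rw [Real.arccos_eq_pi_div_two_sub_arcsin, Real.arccos_eq_pi_div_two_sub_arcsin]
  linarith [Real.monotone_arcsin h]

set_option maxHeartbeats 1000000 in
theorem stmt_4 :
    ∃ C : ℝ, ∀ x : ℝ, 1 ≤ x →
      |Real.pi / Real.arccos (1 - 1 / (2 * x ^ 2)) - Real.pi * x| ≤ C / x := by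
  use 1
  intro x hx
  have hx0 : (0:ℝ) < x := by linarith
  have hx2 : (0:ℝ) < x ^ 2 := by positivity
  have hx21 : (1:ℝ) ≤ x ^ 2 := by nlinarith
  set a : ℝ := 1 - 1 / (2 * x ^ 2) with ha
  have ha1 : a ≤ 1 := by
    rw [ha]; have : 0 < 1 / (2 * x ^ 2) := by positivity
    linarith
  have ha0 : 0 ≤ a := by
    rw [ha]
    have h1 : 1 / (2 * x ^ 2) ≤ 1 / 2 := by
      rw [div_le_div_iff₀ (by positivity) (by norm_num)]
      nlinarith
    linarith
  have haneg : (-1:ℝ) ≤ a := by linarith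
  set θ := Real.arccos a with hθ
  have hθ0 : 0 ≤ θ := Real.arccos_nonneg a
  have hθπ : θ ≤ π := Real.arccos_le_pi a
  -- lower bound: 1/x ≤ θ
  have hlow : 1 / x ≤ θ := by
    have he : 1 - (1/x)^2/2 = a := by
      rw [ha]; field_simp
    have h1 : a ≤ Real.cos (1 / x) := by
      have h := Real.one_sub_sq_div_two_le_cos (x := 1 / x)
      linarith [he ▸ h]
    have h2 : Real.arccos (Real.cos (1/x)) ≤ Real.arccos a :=
      arccos_anti h1
    have h3 : (0:ℝ) ≤ 1 / x := by positivity
    have h4 : 1 / x ≤ π := by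
      have : 1 / x ≤ 1 := by rw [div_le_one hx0]; exact hx
      linarith [Real.pi_gt_three]
    rwa [Real.arccos_cos h3 h4] at h2
  set y : ℝ := 1 / x + 1 / (8 * x ^ 3) with hy
  have hy0 : 0 < y := by positivity
  have hyx : y ≤ 9 / (8 * x) := by
    have he : 9/(8*x) - (1/x + 1/(8*x^3)) = (x^2-1)/(8*x^3) := by
      field_simp; ring
    have hn : 0 ≤ (x^2-1)/(8*x^3) := by
      apply div_nonneg (by linarith) (by positivity)
    rw [hy]; linarith
  have hy1 : y ≤ 9 / 8 := by
    calc y ≤ 9 / (8 * x) := hyx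
      _ ≤ 9 / 8 := by
        rw [div_le_div_iff₀ (by positivity) (by norm_num)]; nlinarith
  -- upper bound: θ ≤ y, via cos y ≤ a
  have hup : θ ≤ y := by
    have hsin : Real.sin (y/2) > y/2 - (y/2)^3/4 := by
      have h := Real.sin_gt_sub_cube (x := y/2) (by positivity)
      have : 0 ≤ (y/2)^3 := by positivity
      linarith
    have hy3 : y^3 ≤ 729/(512*x^3) := by
      calc y^3 ≤ (9/(8*x))^3 := pow_le_pow_left₀ (le_of_lt hy0) hyx 3
        _ = 729/(512*x^3) := by field_simp; ring
    have h729 : y^3/16 ≤ 1/(8*x^3) := by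
      have : 729/(512*x^3)/16 ≤ 1/(8*x^3) := by
        rw [div_div, div_le_div_iff₀ (by positivity) (by positivity)]
        nlinarith
      linarith
    have hkey0 : y/2 - (y/2)^3/4 ≥ 1/(2*x) := by
      have he : (y/2)^3/4 = y^3/32 := by ring
      have h1x : 1/x + 1/(8*x^3) - y^3/16 ≥ 1/x := by linarith
      rw [he]
      have : y - y^3/16 ≥ 1/x := by rw [hy]; linarith
      have h2x : 1/(2*x) = (1/x)/2 := by ring
      linarith
    have hs0 : 0 < y/2 - (y/2)^3/4 := by
      have : (0:ℝ) < 1/(2*x) := by positivity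
      linarith
    have hcos2 : Real.cos y = 1 - 2 * Real.sin (y/2) ^ 2 := by
      have h := Real.cos_two_mul (y/2)
      have h2 := Real.sin_sq_add_cos_sq (y/2)
      rw [show 2 * (y/2) = y by ring] at h
      nlinarith
    have hkey : Real.cos y ≤ a := by
      rw [hcos2, ha]
      have h1 : (y/2 - (y/2)^3/4)^2 ≤ Real.sin (y/2) ^ 2 :=
        pow_le_pow_left₀ (le_of_lt hs0) (le_of_lt hsin) 2
      have hkey0' : 1/(2*x) ≤ y/2 - (y/2)^3/4 := hkey0
      have h2 : (1/(2*x))^2 ≤ (y/2 - (y/2)^3/4)^2 :=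
        pow_le_pow_left₀ (by positivity) hkey0' 2
      have h3 : (1/(2*x))^2 = 1/(4*x^2) := by field_simp; ring
      have h4 : 2 * Real.sin (y/2)^2 ≥ 1/(2*x^2) := by
        rw [h3] at h2
        have : 1/(2*x^2) = 2 * (1/(4*x^2)) := by ring
        nlinarith
      linarith
    have h2 : Real.arccos a ≤ Real.arccos (Real.cos y) := arccos_anti hkey
    have h4 : y ≤ π :=
      hy1.trans (le_of_lt (lt_trans (by norm_num) Real.pi_gt_three))
    rwa [Real.arccos_cos (le_of_lt hy0) h4] at h2
  -- conclude
  have hθpos : 0 < θ := lt_of_lt_of_le (by positivity) hlow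
  have hπ : 0 < π := Real.pi_pos
  have hub : π / θ ≤ π * x := by
    rw [div_le_iff₀ hθpos]
    calc π = π * x * (1/x) := by field_simp
      _ ≤ π * x * θ := by
        apply mul_le_mul_of_nonneg_left hlow (by positivity)
  have hlb : π * x - 1 / x ≤ π / θ := by
    have h1 : π / y ≤ π / θ := div_le_div_of_nonneg_left hπ.le hθpos hup
    have h2 : π * x - 1 / x ≤ π / y := by
      rw [le_div_iff₀ hy0, hy]
      have hπ4 : π ≤ 4 := by linarith [Real.pi_lt_d2]
      have expand : (π * x - 1/x) * (1/x + 1/(8*x^3)) = π + π/(8*x^2) - 1/x^2 - 1/(8*x^4) := by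
        field_simp; ring
      rw [expand]
      have h5 : π / (8*x^2) ≤ 1/(2*x^2) := by
        rw [div_le_div_iff₀ (by positivity) (by positivity)]
        nlinarith
      have h4 : (0:ℝ) < 1/(8*x^4) := by positivity
      have h6 : 1/(2*x^2) ≤ 1/x^2 := by
        rw [div_le_div_iff₀ (by positivity) (by positivity)]; nlinarith
      linarith
    linarith
  rw [abs_le]
  constructor
  · linarith
  · have : (0:ℝ) < 1/x := by positivity
    linarith
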